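/- Let H ∈ (0, 1/2) and define K_H⁻¹ acting on absolutely continuous f by (K_H⁻¹ f)(s) = s^{H−1/2} I_{0+}^{1/2−H}( s^{1/2−H} f')(s), where I_{0+}^α is the left-sided Riemann–Liouville fractional integral. If |f'(u)| ≤ M for a.e. u ∈ [0,T], then ∫₀^T |(K_H⁻¹ f)(s)|² ds ≤ c · T² M² for a constant c depending only on universal quantities (not on H or T ≥ 1). -/

import Mathlib

open intervalIntegral

/-- On `[1, 3/2]` the Gamma function is bounded below by `1/2`. -/
lemma gamma_ge_half {x : ℝ} (h1 : 1 ≤ x) (h2 : x ≤ 3/2) : (1/2 : ℝ) ≤ Real.Gamma x := by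
  have hx0 : (0:ℝ) < x := by linarith
  have hden : (0:ℝ) < 3 - x := by linarith
  have ha : (0:ℝ) ≤ 1 / (3 - x) := by positivity
  have hb : (0:ℝ) ≤ (2 - x) / (3 - x) := by
    apply div_nonneg <;> linarith
  have hab : 1 / (3 - x) + (2 - x) / (3 - x) = 1 := by
    field_simp
    ring
  have hconv := Real.convexOn_log_Gamma.2 (Set.mem_Ioi.mpr hx0)
    (Set.mem_Ioi.mpr (by norm_num : (0:ℝ) < 3)) ha hb hab
  have hcomb : (1 / (3 - x)) • x + ((2 - x) / (3 - x)) • (3:ℝ) = 2 := by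
    simp only [smul_eq_mul]
    rw [div_mul_eq_mul_div, div_mul_eq_mul_div, ← add_div, div_eq_iff hden.ne']
    ring
  rw [hcomb] at hconv
  have hΓ2 : Real.Gamma 2 = 1 := by
    have := Real.Gamma_add_one (by norm_num : (1:ℝ) ≠ 0)
    simpa [Real.Gamma_one] using this
  have hΓ3 : Real.Gamma 3 = 2 := by
    rw [show (3:ℝ) = (2:ℕ) + 1 by norm_num, Real.Gamma_nat_eq_factorial]
    norm_num
  simp only [Function.comp_apply, hΓ2, hΓ3, Real.log_one, smul_eq_mul] at hconv
  -- hconv : 0 ≤ (1/(3-x)) * log Γ x + ((2-x)/(3-x)) * log 2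
  have hΓpos := Real.Gamma_pos_of_pos hx0
  have hlog : Real.log (1/2) ≤ Real.log (Real.Gamma x) := by
    have hlog2 : (0:ℝ) ≤ Real.log 2 := Real.log_nonneg (by norm_num)
    have h2x : (2 - x) ≤ 1 := by linarith
    rw [Real.log_div one_ne_zero two_ne_zero, Real.log_one, zero_sub]
    have key : (3 - x) * (1 / (3 - x) * Real.log (Real.Gamma x)
        + (2 - x) / (3 - x) * Real.log 2)
        = Real.log (Real.Gamma x) + (2 - x) * Real.log 2 := by
      field_simp
    have h0 : 0 ≤ Real.log (Real.Gamma x) + (2 - x) * Real.log 2 := by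
      rw [← key]; exact mul_nonneg hden.le hconv
    nlinarith [mul_le_mul_of_nonneg_right h2x hlog2]
  exact (Real.log_le_log_iff (by norm_num) hΓpos).mp hlog

/-- The left-sided Riemann–Liouville fractional integral `I_{0+}^α`. -/
noncomputable def fracInt (α : ℝ) (g : ℝ → ℝ) (x : ℝ) : ℝ :=
  (1 / Real.Gamma α) * ∫ y in (0:ℝ)..x, (x - y) ^ (α - 1) * g y

/-- The operator `K_H⁻¹` in the singular case `H < 1/2`, acting on an absolutely continuous
`f` with derivative `g = f'`: `(K_H⁻¹ f)(s) = s^{H-1/2} I_{0+}^{1/2-H}(u^{1/2-H} g(u))(s)`. -/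
noncomputable def KHinvSing (H : ℝ) (g : ℝ → ℝ) (s : ℝ) : ℝ :=
  s ^ (H - 1/2) * fracInt (1/2 - H) (fun u => u ^ (1/2 - H) * g u) s


/-- If `|f'| ≤ M` a.e. on `[0,T]` then `∫₀^T |(K_H⁻¹ f)(s)|² ds ≤ c T² M²` for a universal
constant `c` not depending on `H ∈ (0,1/2)` or `T ≥ 1`. -/
theorem KHinv_sq_integral_bound :
    ∃ c : ℝ, 0 < c ∧ ∀ (H T M : ℝ) (g : ℝ → ℝ), 0 < H → H < 1/2 → 1 ≤ T → 0 ≤ M →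
      (∀ᵐ u ∂(MeasureTheory.volume.restrict (Set.Icc (0:ℝ) T)), |g u| ≤ M) →
      (∫ s in (0:ℝ)..T, (KHinvSing H g s) ^ 2) ≤ c * T ^ 2 * M ^ 2 := by
  refine ⟨4, by norm_num, ?_⟩
  intro H T M g hH hH2 hT hM hg
  set α : ℝ := 1/2 - H with hα
  have hα0 : 0 < α := by rw [hα]; linarith
  have hα1 : α < 1/2 := by rw [hα]; linarith
  have hT0 : (0:ℝ) < T := lt_of_lt_of_le one_pos hT
  have hGα : 0 < Real.Gamma α := Real.Gamma_pos_of_pos hα0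
  have hGhalf : (1/2 : ℝ) ≤ Real.Gamma (α + 1) :=
    gamma_ge_half (by linarith) (by linarith)
  have hGadd : Real.Gamma (α + 1) = α * Real.Gamma α := Real.Gamma_add_one hα0.ne'
  -- pointwise bound on (0, T]
  have key : ∀ s ∈ Set.Ioc (0:ℝ) T, |KHinvSing H g s| ≤ 2 * M * s ^ α := by
    intro s hs
    obtain ⟨hs0, hsT⟩ := hs
    -- a.e. bound on the inner integrand
    have hbd : ∀ᵐ y ∂(MeasureTheory.volume.restrict (Set.uIoc 0 s)),
        ‖(s - y) ^ (α - 1) * (y ^ α * g y)‖ ≤ M * s ^ α * (s - y) ^ (α - 1) := by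
      have hsub : Set.uIoc 0 s ⊆ Set.Icc 0 T := by
        rw [Set.uIoc_of_le hs0.le]
        exact fun y hy => ⟨hy.1.le, hy.2.trans hsT⟩
      have hg' : ∀ᵐ y ∂(MeasureTheory.volume.restrict (Set.uIoc 0 s)), |g y| ≤ M :=
        hg.filter_mono (MeasureTheory.ae_mono (MeasureTheory.Measure.restrict_mono hsub le_rfl))
      filter_upwards [hg', MeasureTheory.ae_restrict_mem measurableSet_uIoc] with y hy hmem
      rw [Set.uIoc_of_le hs0.le] at hmem
      obtain ⟨hy0, hys⟩ := hmem
      have h1 : (0:ℝ) ≤ (s - y) ^ (α - 1) := Real.rpow_nonneg (by linarith) _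
      have h2 : y ^ α ≤ s ^ α := Real.rpow_le_rpow hy0.le hys hα0.le
      have h3 : (0:ℝ) ≤ y ^ α := Real.rpow_nonneg hy0.le _
      have h4 : (0:ℝ) ≤ s ^ α := Real.rpow_nonneg hs0.le _
      rw [norm_mul, norm_mul, Real.norm_eq_abs, Real.norm_eq_abs, Real.norm_eq_abs,
        abs_of_nonneg h1, abs_of_nonneg h3]
      have : y ^ α * |g y| ≤ s ^ α * M := by
        apply mul_le_mul h2 hy (abs_nonneg _) h4
      nlinarith [mul_le_mul_of_nonneg_left this h1]
    have hint : IntervalIntegrable (fun y => M * s ^ α * (s - y) ^ (α - 1))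
        MeasureTheory.volume 0 s := by
      apply IntervalIntegrable.const_mul
      have h := (intervalIntegrable_rpow' (by linarith : (-1:ℝ) < α - 1)
        (a := 0) (b := s)).comp_sub_left s
      simpa using h.symm
    have hval : (∫ y in (0:ℝ)..s, (s - y) ^ (α - 1)) = s ^ α / α := by
      have h := integral_comp_sub_left (fun y => y ^ (α - 1)) s (a := 0) (b := s)
      rw [h]
      simp only [sub_self, sub_zero]
      rw [integral_rpow (Or.inl (by linarith : (-1:ℝ) < α - 1))]
      rw [Real.zero_rpow (by linarith : α - 1 + 1 ≠ 0)]
      rw [show α - 1 + 1 = α by ring]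
      ring
    have hnorm := intervalIntegral.norm_integral_le_abs_of_norm_le hbd hint
    have hval2 : (∫ y in (0:ℝ)..s, M * s ^ α * (s - y) ^ (α - 1))
        = M * s ^ α * (s ^ α / α) := by
      rw [intervalIntegral.integral_const_mul, hval]
    rw [hval2] at hnorm
    have hSnn : (0:ℝ) ≤ s ^ α := Real.rpow_nonneg hs0.le _
    have hbnd_nn : (0:ℝ) ≤ M * s ^ α * (s ^ α / α) := by positivity
    rw [abs_of_nonneg hbnd_nn] at hnorm
    -- now assemble
    have hSneg : (0:ℝ) ≤ s ^ (H - 1/2) := Real.rpow_nonneg hs0.le _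
    have e1 : s ^ (H - 1/2) * (s ^ α * s ^ α) = s ^ α := by
      rw [← Real.rpow_add hs0, ← Real.rpow_add hs0]
      congr 1
      rw [hα]; ring
    have habs : |KHinvSing H g s|
        ≤ s ^ (H - 1/2) * (1 / Real.Gamma α * (M * s ^ α * (s ^ α / α))) := by
      unfold KHinvSing fracInt
      rw [abs_mul, abs_mul, abs_of_nonneg hSneg, abs_of_nonneg (by positivity :
        (0:ℝ) ≤ 1 / Real.Gamma α)]
      apply mul_le_mul_of_nonneg_left _ hSneg
      apply mul_le_mul_of_nonneg_left _ (by positivity : (0:ℝ) ≤ 1 / Real.Gamma α)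
      exact hnorm
    refine habs.trans ?_
    have e2 : s ^ (H - 1/2) * (1 / Real.Gamma α * (M * s ^ α * (s ^ α / α)))
        = M / Real.Gamma (α + 1) * s ^ α := by
      have estep : s ^ (H - 1/2) * (1 / Real.Gamma α * (M * s ^ α * (s ^ α / α)))
          = M / (α * Real.Gamma α) * (s ^ (H - 1/2) * (s ^ α * s ^ α)) := by
        field_simp
      rw [hGadd, estep, e1]
    rw [e2]
    have : M / Real.Gamma (α + 1) ≤ 2 * M := by
      rw [div_le_iff₀ (by linarith : (0:ℝ) < Real.Gamma (α + 1))]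
      nlinarith
    exact mul_le_mul_of_nonneg_right this hSnn
  -- outer integral
  have outer_bd : ∀ᵐ s ∂(MeasureTheory.volume.restrict (Set.uIoc (0:ℝ) T)),
      ‖KHinvSing H g s ^ 2‖ ≤ 4 * M ^ 2 * s ^ (2 * α) := by
    filter_upwards [MeasureTheory.ae_restrict_mem measurableSet_uIoc] with s hs
    rw [Set.uIoc_of_le hT0.le] at hs
    have h := key s hs
    have hsq : (s ^ α) ^ (2:ℕ) = s ^ (2 * α) := by
      rw [← Real.rpow_natCast (s ^ α) 2, ← Real.rpow_mul hs.1.le]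
      norm_num
      ring_nf
    have h2 : |KHinvSing H g s| ^ 2 ≤ (2 * M * s ^ α) ^ 2 :=
      pow_le_pow_left₀ (abs_nonneg _) h 2
    rw [Real.norm_eq_abs, abs_pow]
    calc |KHinvSing H g s| ^ 2 ≤ (2 * M * s ^ α) ^ 2 := h2
      _ = 4 * M ^ 2 * (s ^ α) ^ (2:ℕ) := by ring
      _ = 4 * M ^ 2 * s ^ (2 * α) := by rw [hsq]
  have hint2 : IntervalIntegrable (fun s => 4 * M ^ 2 * s ^ (2 * α))
      MeasureTheory.volume 0 T :=
    (intervalIntegrable_rpow' (by linarith : (-1:ℝ) < 2 * α)).const_mul _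
  have hnorm2 := intervalIntegral.norm_integral_le_abs_of_norm_le outer_bd hint2
  have hval3 : (∫ s in (0:ℝ)..T, 4 * M ^ 2 * s ^ (2 * α))
      = 4 * M ^ 2 * (T ^ (2 * α + 1) / (2 * α + 1)) := by
    rw [intervalIntegral.integral_const_mul,
      integral_rpow (Or.inl (by linarith : (-1:ℝ) < 2 * α)),
      Real.zero_rpow (by linarith : 2 * α + 1 ≠ 0)]
    ring
  rw [hval3] at hnorm2
  have hfin : 4 * M ^ 2 * (T ^ (2 * α + 1) / (2 * α + 1)) ≤ 4 * T ^ 2 * M ^ 2 := by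
    have hTle : T ^ (2 * α + 1) ≤ T ^ (2:ℝ) :=
      Real.rpow_le_rpow_of_exponent_le hT (by rw [hα]; linarith)
    have hT2 : T ^ (2:ℝ) = T ^ (2:ℕ) := by
      rw [← Real.rpow_natCast T 2]; norm_num
    have hdiv : T ^ (2 * α + 1) / (2 * α + 1) ≤ T ^ (2 * α + 1) := by
      apply div_le_self (Real.rpow_nonneg (by linarith) _) (by rw [hα]; linarith)
    have hX : T ^ (2 * α + 1) / (2 * α + 1) ≤ T ^ (2:ℕ) := by
      rw [← hT2]; exact hdiv.trans hTle
    calc 4 * M ^ 2 * (T ^ (2 * α + 1) / (2 * α + 1))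
        ≤ 4 * M ^ 2 * T ^ (2:ℕ) :=
          mul_le_mul_of_nonneg_left hX (by positivity)
      _ = 4 * T ^ 2 * M ^ 2 := by ring
  have habs2 : |4 * M ^ 2 * (T ^ (2 * α + 1) / (2 * α + 1))|
      = 4 * M ^ 2 * (T ^ (2 * α + 1) / (2 * α + 1)) := by
    apply abs_of_nonneg
    positivity
  rw [habs2] at hnorm2
  calc (∫ s in (0:ℝ)..T, (KHinvSing H g s) ^ 2)
      ≤ ‖∫ s in (0:ℝ)..T, (KHinvSing H g s) ^ 2‖ := le_abs_self _
    _ ≤ 4 * M ^ 2 * (T ^ (2 * α + 1) / (2 * α + 1)) := hnorm2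
    _ ≤ 4 * T ^ 2 * M ^ 2 := hfin
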